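/- Let V ⊊ [n], let Σ = (x_0,…,x_m) be an arbitrary ordering of [n]∖V, and let 𝒜 = (A_1|…|A_k) be a prefix in V. (1) If 𝒜 is not full, then the standard matching M_Σ restricts to a perfect matching of the graph Γ_n(V,𝒜). (2) If 𝒜 is full, then M_Σ restricts to a near-perfect matching of Γ_n(V,𝒜), whose unique critical vertex is (A_1|…|A_k|{x_0}|…|{x_m}). -/

import Mathlib

open Finset

/-- union of a list of finsets -/
def lunion {α : Type*} [DecidableEq α] (L : List (Finset α)) : Finset α := L.foldr (· ∪ ·) ∅

/-- `IsOSP A L` : `L` is an ordered set partition of the finite set `A`. -/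
def IsOSP {α : Type*} [DecidableEq α] (A : Finset α) (L : List (Finset α)) : Prop :=
  (∀ B ∈ L, B.Nonempty) ∧ L.Pairwise (fun B C => Disjoint B C) ∧ lunion L = A

/-- `seenBlk L x` = `A_1 ∪ … ∪ A_{i(x)}`, the union of the blocks of `L` up to and
including the block containing `x`. -/
def seenBlk {α : Type*} [DecidableEq α] : List (Finset α) → α → Finset α
  | [], _ => ∅
  | A :: rest, x => if x ∈ A then A else A ∪ seenBlk rest x

/-- rank (1-based position in the increasing order) of `x` in the finset `S`. -/
def rankIn (S : Finset ℕ) (x : ℕ) : ℕ := (S.filter (fun y => y ≤ x)).card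

/-- the set `F(σ)` of flippable colors, for an ordered set partition of `[n] = {0,…,n}` -/
def Fset (n : ℕ) (L : List (Finset ℕ)) : Finset ℕ :=
  match L.getLast? with
  | some A => if A.card = 1 then Finset.range (n+1) \ A else Finset.range (n+1)
  | none => Finset.range (n+1)

/-- the flip `F(σ,x)` of an ordered set partition with respect to the color `x` -/
def flipOSP (x : ℕ) : List (Finset ℕ) → List (Finset ℕ)
  | [] => []
  | A :: rest =>
    if x ∈ A then
      if 2 ≤ A.card then {x} :: A.erase x :: rest
      else
        match rest with
        | [] => [A]
        | B :: rest' => insert x B :: rest'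
    else A :: flipOSP x rest

def levelAux : List ℕ → List (Finset ℕ) → Option ℕ
  | [], _ => none
  | _ :: _, [] => none
  | x :: xs, A :: As => if A = {x} then levelAux xs As else some x

/-- `levelFn Σ σ` = `level(σ,Σ)` (as an `Option`; `none` = undefined). -/
def levelFn (Sig : List ℕ) (L : List (Finset ℕ)) : Option ℕ :=
  levelAux Sig.reverse L.reverse

/-- ordered set partitions of `[n] = {0,…,n}` -/
def OSPn (n : ℕ) : Type := {L : List (Finset ℕ) // IsOSP (Finset.range (n+1)) L}

/-- the graph `Γ_n`: vertices are the ordered set partitions of `[n]`, with `σ` and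
`F(σ,x)` joined by an edge for every `x ∈ F(σ)`. -/
def Gamma (n : ℕ) : SimpleGraph (OSPn n) where
  Adj σ τ := σ ≠ τ ∧
    ((∃ x ∈ Fset n σ.1, τ.1 = flipOSP x σ.1) ∨ (∃ x ∈ Fset n τ.1, σ.1 = flipOSP x τ.1))
  symm := ⟨fun σ τ h => ⟨h.1.symm, h.2.symm⟩⟩
  loopless := ⟨fun σ h => h.1 rfl⟩

/-- a matching: a set of edges of `G`, no two of which share a vertex -/
def IsMatchingSet {V : Type*} (G : SimpleGraph V) (M : Set (Sym2 V)) : Prop :=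
  (∀ e ∈ M, e ∈ G.edgeSet) ∧ ∀ e ∈ M, ∀ f ∈ M, ∀ v : V, v ∈ e → v ∈ f → e = f

/-- a vertex is critical w.r.t. `M` if it lies in no edge of `M` -/
def CriticalVx {V : Type*} (M : Set (Sym2 V)) (v : V) : Prop := ∀ e ∈ M, v ∉ e

/-- the standard matching `M_Σ`, as a set of edges of `Γ_n` -/
def MSigma (n : ℕ) (Sig : List ℕ) : Set (Sym2 (OSPn n)) :=
  {e | ∃ σ τ : OSPn n, ∃ x, levelFn Sig σ.1 = some x ∧ τ.1 = flipOSP x σ.1 ∧ e = s(σ, τ)}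

/-- a list of edges is alternating w.r.t. `M` -/
def Alternates {V : Type*} (M : Set (Sym2 V)) (es : List (Sym2 V)) : Prop :=
  es.Chain' (fun e f => e ∈ M ↔ f ∉ M)

def IsProperlyAlternating {V : Type*} {G : SimpleGraph V} (M : Set (Sym2 V)) {u v : V}
    (p : G.Walk u v) : Prop :=
  Alternates M p.edges ∧
  (∀ e, p.edges.head? = some e → e ∉ M → CriticalVx M u) ∧
  (∀ e, p.edges.getLast? = some e → e ∉ M → CriticalVx M v)

def IsSemiAugmenting {V : Type*} {G : SimpleGraph V} (M : Set (Sym2 V)) {u v : V}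
    (p : G.Walk u v) : Prop :=
  IsProperlyAlternating M p ∧
  (∃ e, p.edges.head? = some e ∧ e ∈ M) ∧ (∃ e, p.edges.getLast? = some e ∧ e ∉ M)

def IsNonAugmenting {V : Type*} {G : SimpleGraph V} (M : Set (Sym2 V)) {u v : V}
    (p : G.Walk u v) : Prop :=
  Alternates M p.edges ∧
  (∃ e, p.edges.head? = some e ∧ e ∈ M) ∧ (∃ e, p.edges.getLast? = some e ∧ e ∈ M)

def IsWeaklySemiAugmenting {V : Type*} {G : SimpleGraph V} (M : Set (Sym2 V)) {u v : V}
    (p : G.Walk u v) : Prop :=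
  Alternates M p.edges ∧
  (p.edges = [] ∨
    ((∃ e, p.edges.head? = some e ∧ e ∈ M) ∧ (∃ e, p.edges.getLast? = some e ∧ e ∉ M)))

/-- a partial ordered set partition, as a list of pairs of blocks `(A_i, B_i)` -/
abbrev RawPOSP := List (Finset ℕ × Finset ℕ)

def carrierP (σ : RawPOSP) : Finset ℕ := (σ.map Prod.fst).foldr (· ∪ ·) ∅
def colorsP (σ : RawPOSP) : Finset ℕ := (σ.map Prod.snd).foldr (· ∪ ·) ∅

/-- `σ` is a partial ordered set partition of `[n] = {0,…,n}` -/
def IsPOSP (n : ℕ) (σ : RawPOSP) : Prop :=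
  σ ≠ [] ∧ (∀ p ∈ σ, p.2.Nonempty ∧ p.2 ⊆ p.1 ∧ p.1 ⊆ Finset.range (n+1)) ∧
  (σ.map Prod.fst).Pairwise (fun A B => Disjoint A B)

/-- view an ordered set partition as a partial one, with `B_i = A_i` -/
def toPairs (L : List (Finset ℕ)) : RawPOSP := L.map (fun A => (A, A))

def dlAux (S : Finset ℕ) : Finset ℕ → RawPOSP → RawPOSP
  | _, [] => []
  | acc, (A, B) :: rest =>
    if B ⊆ S then dlAux S (acc ∪ A) rest
    else (acc ∪ A, B \ S) :: dlAux S ∅ rest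

/-- the deletion `dl(σ, S)` -/
def dl (σ : RawPOSP) (S : Finset ℕ) : RawPOSP := dlAux S ∅ σ

/-- `D(σ, S)` = `A_i ∪ … ∪ A_t` for the minimal `i` with `B_i ∪ … ∪ B_t ⊆ S`, else `∅` -/
def Dfun (S : Finset ℕ) : RawPOSP → Finset ℕ
  | [] => ∅
  | b :: rest => if colorsP (b :: rest) ⊆ S then carrierP (b :: rest) else Dfun S rest

def nodesAux : Finset ℕ → RawPOSP → Finset (Finset ℕ × ℕ)
  | _, [] => ∅
  | acc, (A, B) :: rest => B.image (fun x => (acc ∪ A, x)) ∪ nodesAux (acc ∪ A) rest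

/-- the node set `V(σ)` of a partial ordered set partition -/
def nodesP (σ : RawPOSP) : Finset (Finset ℕ × ℕ) := nodesAux ∅ σ

/-- an ordered set partition of the whole of `[n]`, viewed as a partial one -/
def IsFullOSP (n : ℕ) (σ : RawPOSP) : Prop :=
  IsPOSP n σ ∧ carrierP σ = Finset.range (n+1) ∧ ∀ p ∈ σ, p.2 = p.1

/-- simplices of the standard chromatic subdivision `χ(Δⁿ)` -/
def IsSimplexChi (n : ℕ) (W : Finset (Finset ℕ × ℕ)) : Prop :=
  ∃ σ : RawPOSP, IsFullOSP n σ ∧ W ⊆ nodesP σ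

/-- a linked tuple of partial ordered set partitions -/
def Linked (T : List RawPOSP) : Prop := T.Chain' (fun σ τ => colorsP σ = carrierP τ)

/-- vertices of `χ^d(Δⁿ)`: linked `d`-tuples whose last entry has a singleton color set -/
def IsVertexChi (n d : ℕ) (v : List RawPOSP) : Prop :=
  v.length = d ∧ (∀ σ ∈ v, IsPOSP n σ) ∧ Linked v ∧ (colorsP (v.getLastD [])).card = 1

/-- the `n`-simplices of `χ^d(Δⁿ)`: linked `d`-tuples of ordered set partitions of `[n]` -/
def IsTopSimplexChi (n d : ℕ) (T : List RawPOSP) : Prop :=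
  T.length = d ∧ Linked T ∧
  ∀ σ ∈ T, IsPOSP n σ ∧ carrierP σ = Finset.range (n+1) ∧ ∀ p ∈ σ, p.2 = p.1

def faceAux : Finset ℕ → List RawPOSP → List RawPOSP
  | _, [] => []
  | S, σ :: rest => dl σ S :: faceAux (Dfun S σ) rest

/-- the face of the simplex `T` of `χ^d(Δⁿ)` determined by `S_d = S`:
`(dl(σ_1,S_1),…,dl(σ_d,S_d))` with `S_i = D(σ_{i+1},S_{i+1})`. -/
def faceT (T : List RawPOSP) (S : Finset ℕ) : List RawPOSP := (faceAux S T.reverse).reverse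

/-- the vertex of the `n`-simplex `T` colored `x` -/
def vertexOf (T : List RawPOSP) (x : ℕ) : List RawPOSP :=
  faceT T ((colorsP (T.getLastD [])) \ {x})

/-- relabel all elements by `f` -/
def relabel (f : ℕ → ℕ) (T : List RawPOSP) : List RawPOSP :=
  T.map (fun σ => σ.map (fun p => (p.1.image f, p.2.image f)))

/-- the unique order preserving bijection `I → J` (extended by the identity) -/
noncomputable def oMap (I J : Finset ℕ) (h : I.card = J.card) (x : ℕ) : ℕ :=
  if hx : x ∈ I then ((J.orderIsoOfFin h.symm) ((I.orderIsoOfFin rfl).symm ⟨x, hx⟩) : ℕ)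
  else x

/-- a compliant binary labeling of the vertices of `χ^d(Δⁿ)` -/
def Compliant (n d : ℕ) (lab : List RawPOSP → Bool) : Prop :=
  ∀ I J : Finset ℕ, I ⊆ Finset.range (n+1) → J ⊆ Finset.range (n+1) →
    ∀ h : I.card = J.card, ∀ v : List RawPOSP, IsVertexChi n d v →
      carrierP v.headI ⊆ I → lab (relabel (oMap I J h) v) = lab v

/-- the number of ordered set partitions of `[n] = {0,…,n}` -/
noncomputable def fOSP (n : ℕ) : ℕ :=
  Nat.card {L : List (Finset ℕ) // IsOSP (Finset.range (n+1)) L}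

/-- membership in the vertex set of `Γ_n(V)` -/
def InGammaV (V : Finset ℕ) (L : List (Finset ℕ)) : Prop :=
  ∃ A rest, L = A :: rest ∧ ¬ A ⊆ V

/-- a prefix in `V`: a tuple of nonempty pairwise disjoint subsets of `V` -/
def IsPrefixIn {α : Type*} [DecidableEq α] (V : Finset α) (P : List (Finset α)) : Prop :=
  (∀ A ∈ P, A.Nonempty ∧ A ⊆ V) ∧ P.Pairwise (fun A B => Disjoint A B)

/-- membership in the vertex set of `Γ_n(V,𝒜)` -/
def InGammaVA (V : Finset ℕ) (P : List (Finset ℕ)) (L : List (Finset ℕ)) : Prop :=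
  ∃ A rest, L = P ++ A :: rest ∧ ¬ A ⊆ V

/-- conducting bipartite graph of the first type -/
def ConductingFirst {V : Type*} (G : SimpleGraph V) (A B : Set V) : Prop :=
  A.ncard = B.ncard + 1 ∧
  ∀ v ∈ A, ∃ M : Set (Sym2 V), IsMatchingSet G M ∧ ∀ u, CriticalVx M u ↔ u = v

/-- conducting bipartite graph of the second type -/
def ConductingSecond {V : Type*} (G : SimpleGraph V) (A B : Set V) : Prop :=
  A.ncard = B.ncard ∧
  ∀ v ∈ A, ∀ w ∈ B, ∃ M : Set (Sym2 V), IsMatchingSet G M ∧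
    ∀ u, CriticalVx M u ↔ (u = v ∨ u = w)

/-- the vertex of the `n`-simplex `(As ‖ Bs)` of `χ²(Δⁿ)` colored `x` is internal -/
def InternalVx (n : ℕ) (As Bs : List (Finset ℕ)) (x : ℕ) : Prop :=
  carrierP (dl (toPairs As) (Finset.range (n+1) \ seenBlk Bs x)) = Finset.range (n+1)

lemma my_lunion_nil {α : Type*} [DecidableEq α] : lunion ([] : List (Finset α)) = ∅ := rfl

lemma my_lunion_cons {α : Type*} [DecidableEq α] (A : Finset α) (L : List (Finset α)) :
    lunion (A :: L) = A ∪ lunion L := rfl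

lemma my_lunion_append {α : Type*} [DecidableEq α] (L M : List (Finset α)) :
    lunion (L ++ M) = lunion L ∪ lunion M := by
  induction L with
  | nil => simp [my_lunion_nil, my_lunion_cons]
  | cons A L ih => simp [my_lunion_cons, ih, Finset.union_assoc]

lemma my_mem_lunion {α : Type*} [DecidableEq α] {x : α} {L : List (Finset α)} :
    x ∈ lunion L ↔ ∃ A ∈ L, x ∈ A := by
  induction L with
  | nil => simp [my_lunion_nil]
  | cons A L ih => simp [my_lunion_cons, ih]

lemma my_subset_lunion {α : Type*} [DecidableEq α] {A : Finset α} {L : List (Finset α)}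
    (h : A ∈ L) : A ⊆ lunion L := fun x hx => my_mem_lunion.2 ⟨A, h, hx⟩

lemma my_lunion_map_singleton (l : List ℕ) :
    lunion (l.map (fun y => ({y} : Finset ℕ))) = l.toFinset := by
  induction l with
  | nil => rfl
  | cons a l ih => simp [my_lunion_cons, ih, ← Finset.insert_eq]

lemma my_disjoint_lunion {α : Type*} [DecidableEq α] {A : Finset α} {L : List (Finset α)}
    (h : ∀ B ∈ L, Disjoint A B) : Disjoint A (lunion L) := by
  induction L with
  | nil => simp [my_lunion_nil]
  | cons B L ih =>
      rw [my_lunion_cons, Finset.disjoint_union_right]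
      exact ⟨h B (by simp), ih fun C hC => h C (by simp [hC])⟩

lemma my_singleton_of_mem_card_le {A : Finset ℕ} {x : ℕ} (hx : x ∈ A) (h : ¬ 2 ≤ A.card) :
    A = {x} := by
  push_neg at h
  have h1 : 1 ≤ A.card := Finset.card_pos.2 ⟨x, hx⟩
  have : A.card = 1 := le_antisymm (by omega) h1
  obtain ⟨y, hy⟩ := Finset.card_eq_one.1 this
  subst hy
  simp_all

lemma my_lunion_flip (x : ℕ) (L : List (Finset ℕ)) : lunion (flipOSP x L) = lunion L := by
  induction L with
  | nil => rfl
  | cons A rest ih =>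
      simp only [flipOSP]
      by_cases hx : x ∈ A
      · rw [if_pos hx]
        by_cases h2 : 2 ≤ A.card
        · rw [if_pos h2]
          simp only [my_lunion_cons, ← Finset.union_assoc, ← Finset.insert_eq,
            Finset.insert_erase hx]
        · rw [if_neg h2]
          have hA := my_singleton_of_mem_card_le hx h2
          cases rest with
          | nil => rfl
          | cons B rest' =>
              simp only [my_lunion_cons, ← Finset.union_assoc, Finset.insert_eq, hA]
      · rw [if_neg hx]
        simp [my_lunion_cons, ih]

lemma my_flip_nonempty {x : ℕ} {L : List (Finset ℕ)} (h : ∀ B ∈ L, B.Nonempty) :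
    ∀ B ∈ flipOSP x L, B.Nonempty := by
  induction L with
  | nil => simp [flipOSP]
  | cons A rest ih =>
      simp only [flipOSP]
      by_cases hx : x ∈ A
      · rw [if_pos hx]
        by_cases h2 : 2 ≤ A.card
        · rw [if_pos h2]
          intro B hB
          simp only [List.mem_cons] at hB
          rcases hB with rfl | rfl | hB
          · exact ⟨x, by simp⟩
          · rw [← Finset.card_pos, Finset.card_erase_of_mem hx]; omega
          · exact h B (by simp [hB])
        · rw [if_neg h2]
          cases rest with
          | nil => intro B hB; simp only [List.mem_cons] at hB
                   rcases hB with rfl | hB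
                   · exact ⟨x, hx⟩
                   · simp at hB
          | cons C rest' =>
              intro B hB
              simp only [List.mem_cons] at hB
              rcases hB with rfl | hB
              · exact ⟨x, by simp⟩
              · exact h B (by simp [hB])
      · rw [if_neg hx]
        intro B hB
        simp only [List.mem_cons] at hB
        rcases hB with rfl | hB
        · exact h B (by simp)
        · exact ih (fun C hC => h C (by simp [hC])) B hB

lemma my_flip_mem_subset {x : ℕ} {L : List (Finset ℕ)} {B : Finset ℕ}
    (h : B ∈ flipOSP x L) : B ⊆ lunion L := by
  rw [← my_lunion_flip x L]; exact my_subset_lunion h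

lemma my_flip_pairwise {x : ℕ} {L : List (Finset ℕ)}
    (hd : L.Pairwise (fun B C => Disjoint B C)) :
    (flipOSP x L).Pairwise (fun B C => Disjoint B C) := by
  induction L with
  | nil => simp [flipOSP]
  | cons A rest ih =>
      rw [List.pairwise_cons] at hd
      obtain ⟨hA, hrest⟩ := hd
      simp only [flipOSP]
      by_cases hx : x ∈ A
      · rw [if_pos hx]
        by_cases h2 : 2 ≤ A.card
        · rw [if_pos h2]
          refine List.Pairwise.cons ?_ (List.Pairwise.cons ?_ hrest)
          · intro B hB
            simp only [List.mem_cons] at hB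
            rcases hB with rfl | hB
            · simp [Finset.disjoint_singleton_left]
            · exact Finset.disjoint_singleton_left.2 fun hxB =>
                Finset.disjoint_left.1 (hA B hB) hx hxB
          · intro B hB
            exact (hA B hB).mono_left (Finset.erase_subset x A)
        · rw [if_neg h2]
          cases rest with
          | nil => simp
          | cons C rest' =>
              rw [List.pairwise_cons] at hrest
              obtain ⟨hC, hrest'⟩ := hrest
              refine List.Pairwise.cons ?_ hrest'
              intro B hB
              rw [Finset.insert_eq, Finset.disjoint_union_left]
              refine ⟨Finset.disjoint_singleton_left.2 fun hxB => ?_, hC B hB⟩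
              exact Finset.disjoint_left.1 (hA B (by simp [hB])) hx hxB
      · rw [if_neg hx]
        refine List.Pairwise.cons ?_ (ih hrest)
        intro B hB
        have hBsub : B ⊆ lunion rest := my_flip_mem_subset hB
        exact (my_disjoint_lunion hA).mono_right hBsub

lemma my_flip_isOSP {x : ℕ} {S : Finset ℕ} {L : List (Finset ℕ)} (h : IsOSP S L) :
    IsOSP S (flipOSP x L) :=
  ⟨my_flip_nonempty h.1, my_flip_pairwise h.2.1, by rw [my_lunion_flip]; exact h.2.2⟩

lemma my_flip_append {x : ℕ} {P t : List (Finset ℕ)} (h : ∀ A ∈ P, x ∉ A) :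
    flipOSP x (P ++ t) = P ++ flipOSP x t := by
  induction P with
  | nil => rfl
  | cons A P ih =>
      simp only [List.cons_append, flipOSP, if_neg (h A (by simp))]
      rw [ih fun B hB => h B (by simp [hB])]

lemma my_levelAux_some_mem : ∀ {xs : List ℕ} {As : List (Finset ℕ)} {x : ℕ},
    levelAux xs As = some x → x ∈ xs := by
  intro xs
  induction xs with
  | nil => intro As x h; simp [levelAux] at h
  | cons y ys ih =>
      intro As x h
      cases As with
      | nil => simp [levelAux] at h
      | cons A As =>
          simp only [levelAux] at h
          by_cases hA : A = {y}
          · rw [if_pos hA] at h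
            exact List.mem_cons_of_mem _ (ih h)
          · rw [if_neg hA] at h
            simp at h
            simp [h]

lemma my_levelAux_none_iff : ∀ (xs : List ℕ) (As : List (Finset ℕ)),
    levelAux xs As = none ↔
      (As <+: xs.map (fun y => ({y} : Finset ℕ)) ∨ xs.map (fun y => ({y} : Finset ℕ)) <+: As) := by
  intro xs
  induction xs with
  | nil => intro As; simp [levelAux]
  | cons y ys ih =>
      intro As
      cases As with
      | nil => simp [levelAux]
      | cons A As =>
          simp only [levelAux, List.map_cons, List.cons_prefix_cons]
          by_cases hA : A = {y}
          · rw [if_pos hA]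
            rw [ih As]
            constructor
            · rintro (h | h)
              · exact Or.inl ⟨hA, h⟩
              · exact Or.inr ⟨hA.symm, h⟩
            · rintro (⟨_, h⟩ | ⟨_, h⟩)
              · exact Or.inl h
              · exact Or.inr h
          · rw [if_neg hA]
            constructor
            · intro h; simp at h
            · rintro (⟨h, _⟩ | ⟨h, _⟩)
              · exact absurd h hA
              · exact absurd h.symm hA

lemma my_levelFn_none_iff (Sig : List ℕ) (L : List (Finset ℕ)) :
    levelFn Sig L = none ↔
      (L <:+ Sig.map (fun y => ({y} : Finset ℕ)) ∨ Sig.map (fun y => ({y} : Finset ℕ)) <:+ L) := by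
  rw [levelFn, my_levelAux_none_iff]
  rw [List.map_reverse]
  rw [List.reverse_prefix, List.reverse_prefix]

lemma my_levelFn_some_mem {Sig : List ℕ} {L : List (Finset ℕ)} {x : ℕ}
    (h : levelFn Sig L = some x) : x ∈ Sig := by
  have := my_levelAux_some_mem h
  simpa using this

lemma my_align {V : Finset ℕ} : ∀ (P front : List (Finset ℕ)) (A : Finset ℕ)
    (rest tail : List (Finset ℕ)),
    P ++ A :: rest = front ++ tail → (∀ B ∈ P, B ⊆ V) → ¬ A ⊆ V →
    (∀ B ∈ front, B ⊆ V) → (∀ C ∈ tail, ¬ C ⊆ V) → P = front ∧ A :: rest = tail := by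
  intro P
  induction P with
  | nil =>
      intro front A rest tail heq _ hA hfront htail
      cases front with
      | nil => exact ⟨rfl, heq⟩
      | cons B front' =>
          simp only [List.nil_append, List.cons_append, List.cons.injEq] at heq
          exact absurd (heq.1 ▸ hfront B (by simp)) hA
  | cons B P' ih =>
      intro front A rest tail heq hP hA hfront htail
      cases front with
      | nil =>
          simp only [List.nil_append] at heq
          have : B ∈ tail := by rw [← heq]; simp
          exact absurd (hP B (by simp)) (htail B this)
      | cons C front' =>
          simp only [List.cons_append, List.cons.injEq] at heq
          obtain ⟨rfl, heq2⟩ := heq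
          obtain ⟨h1, h2⟩ := ih front' A rest tail heq2 (fun D hD => hP D (by simp [hD])) hA
            (fun D hD => hfront D (by simp [hD])) htail
          exact ⟨by rw [h1], h2⟩

/-- The Matching Lemma: for a prefix `𝒜` in `V ⊊ [n]` and `Σ` an ordering of `[n]∖V`,
the standard matching `M_Σ` restricts to a perfect matching of `Γ_n(V,𝒜)` if `𝒜` is
not full, and to a near-perfect matching with unique critical vertex
`(A_1|…|A_k|{x_0}|…|{x_m})` if `𝒜` is full. -/
theorem statement13 (n : ℕ) (V : Finset ℕ) (hV : V ⊂ Finset.range (n + 1))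
    (Sig : List ℕ) (hnd : Sig.Nodup)
    (hmem : ∀ y, y ∈ Sig ↔ y ∈ Finset.range (n + 1) \ V)
    (P : List (Finset ℕ)) (hP : IsPrefixIn V P) :
    (lunion P ≠ V → ∀ σ : OSPn n, InGammaVA V P σ.1 →
      ∃ x, levelFn Sig σ.1 = some x ∧
        IsOSP (Finset.range (n + 1)) (flipOSP x σ.1) ∧
        InGammaVA V P (flipOSP x σ.1)) ∧
    (lunion P = V →
      (IsOSP (Finset.range (n + 1)) (P ++ Sig.map (fun y => ({y} : Finset ℕ))) ∧
       InGammaVA V P (P ++ Sig.map (fun y => ({y} : Finset ℕ)))) ∧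
      ∀ σ : OSPn n, InGammaVA V P σ.1 →
        (levelFn Sig σ.1 = none ↔ σ.1 = P ++ Sig.map (fun y => ({y} : Finset ℕ))) ∧
        (σ.1 ≠ P ++ Sig.map (fun y => ({y} : Finset ℕ)) →
          ∃ x, levelFn Sig σ.1 = some x ∧
            IsOSP (Finset.range (n + 1)) (flipOSP x σ.1) ∧
            InGammaVA V P (flipOSP x σ.1))) := by
  have hVsub : V ⊆ Finset.range (n + 1) := hV.subset
  have hSignotV : ∀ x ∈ Sig, x ∉ V := fun x hx => (Finset.mem_sdiff.1 ((hmem x).1 hx)).2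
  have hPsubV : ∀ B ∈ P, B ⊆ V := fun B hB => (hP.1 B hB).2
  have hPne : ∀ B ∈ P, B.Nonempty := fun B hB => (hP.1 B hB).1
  have hSig_to : Sig.toFinset = Finset.range (n + 1) \ V := by
    ext y; rw [List.mem_toFinset, hmem y]
  have htail : ∀ C ∈ Sig.map (fun y => ({y} : Finset ℕ)), ¬ C ⊆ V := by
    intro C hC
    simp only [List.mem_map] at hC
    obtain ⟨y, hy, rfl⟩ := hC
    rw [Finset.singleton_subset_iff]
    exact hSignotV y hy
  have keynone : ∀ L : List (Finset ℕ), IsOSP (Finset.range (n + 1)) L → InGammaVA V P L →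
      levelFn Sig L = none →
      L = P ++ Sig.map (fun y => ({y} : Finset ℕ)) ∧ lunion P = V := by
    intro L hL hG h0
    obtain ⟨A, rest, hLP, hAV⟩ := hG
    rw [my_levelFn_none_iff] at h0
    rcases h0 with h0 | h0
    · obtain ⟨t, ht⟩ := h0
      have hLdrop : L = (Sig.drop t.length).map (fun y => ({y} : Finset ℕ)) := by
        have h1 := congrArg (List.drop t.length) ht
        rw [List.drop_left] at h1
        rw [List.map_drop]; exact h1
      have hUL : lunion L = (Sig.drop t.length).toFinset := by
        rw [hLdrop, my_lunion_map_singleton]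
      have hrange : (Sig.drop t.length).toFinset = Finset.range (n + 1) := by
        rw [← hUL]; exact hL.2.2
      have hVempty : V = ∅ := by
        rw [Finset.eq_empty_iff_forall_notMem]
        intro v hv
        have hv1 : v ∈ (Sig.drop t.length).toFinset := hrange ▸ hVsub hv
        have hv2 : v ∈ Sig := List.mem_of_mem_drop (List.mem_toFinset.1 hv1)
        exact hSignotV v hv2 hv
      have hPnil : P = [] := by
        cases P with
        | nil => rfl
        | cons B P' =>
            have h1 := hPne B (by simp)
            have h2 := hPsubV B (by simp)
            rw [hVempty, Finset.subset_empty] at h2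
            rw [h2] at h1
            exact absurd rfl h1.ne_empty
      have hzsSig : Sig.drop t.length = Sig := by
        have hsuf : Sig.drop t.length <:+ Sig := List.drop_suffix t.length Sig
        have hnd' : (Sig.drop t.length).Nodup := List.Nodup.sublist hsuf.sublist hnd
        refine hsuf.eq_of_length ?_
        have e1 : (Sig.drop t.length).toFinset.card = (Sig.drop t.length).length :=
          List.toFinset_card_of_nodup hnd'
        have e2 : Sig.toFinset.card = Sig.length := List.toFinset_card_of_nodup hnd
        have e3 : Sig.toFinset = Finset.range (n + 1) := by
          rw [hSig_to, hVempty, Finset.sdiff_empty]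
        rw [← e1, ← e2, e3, hrange]
      rw [hzsSig] at hLdrop
      exact ⟨by rw [hLdrop, hPnil, List.nil_append], by rw [hPnil, hVempty]; rfl⟩
    · obtain ⟨front, hfront⟩ := h0
      have hfrontV : ∀ B ∈ front, B ⊆ V := by
        intro B hB b hbB
        have hbrange : b ∈ Finset.range (n + 1) := by
          rw [← hL.2.2]
          exact my_mem_lunion.2 ⟨B, by rw [← hfront]; exact List.mem_append_left _ hB, hbB⟩
        by_contra hbV
        have hbSig : b ∈ Sig := (hmem b).2 (Finset.mem_sdiff.2 ⟨hbrange, hbV⟩)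
        have hdisj := hL.2.1
        rw [← hfront, List.pairwise_append] at hdisj
        have hd : Disjoint B ({b} : Finset ℕ) :=
          hdisj.2.2 B hB {b} (List.mem_map.2 ⟨b, hbSig, rfl⟩)
        exact Finset.disjoint_left.1 hd hbB (Finset.mem_singleton_self b)
      obtain ⟨hPeq, hAeq⟩ := my_align P front A rest _ (hLP.symm.trans hfront.symm)
        hPsubV hAV hfrontV htail
      have hLfull : L = P ++ Sig.map (fun y => ({y} : Finset ℕ)) := by
        rw [hLP, hAeq, hPeq]
      refine ⟨hLfull, ?_⟩
      have hUL : Finset.range (n + 1) = lunion P ∪ Sig.toFinset := by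
        rw [← hL.2.2, hLfull, my_lunion_append, my_lunion_map_singleton]
      apply Finset.Subset.antisymm
      · intro v hv
        obtain ⟨B, hB, hvB⟩ := my_mem_lunion.1 hv
        exact hPsubV B hB hvB
      · intro v hv
        have hv1 : v ∈ lunion P ∪ Sig.toFinset := by rw [← hUL]; exact hVsub hv
        rcases Finset.mem_union.1 hv1 with h | h
        · exact h
        · exact absurd hv (hSignotV v (List.mem_toFinset.1 h))
  have keysome : ∀ σ : OSPn n, InGammaVA V P σ.1 → ∀ x, levelFn Sig σ.1 = some x →
      IsOSP (Finset.range (n + 1)) (flipOSP x σ.1) ∧ InGammaVA V P (flipOSP x σ.1) := by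
    intro σ hG x hx
    have hxV : x ∉ V := hSignotV x (my_levelFn_some_mem hx)
    refine ⟨my_flip_isOSP σ.2, ?_⟩
    obtain ⟨A, rest, hLP, hAV⟩ := hG
    rw [hLP, my_flip_append (fun B hB hxB => hxV (hPsubV B hB hxB))]
    simp only [flipOSP]
    by_cases hxA : x ∈ A
    · rw [if_pos hxA]
      by_cases h2 : 2 ≤ A.card
      · rw [if_pos h2]
        exact ⟨{x}, _, rfl, fun h => hxV (h (Finset.mem_singleton_self x))⟩
      · rw [if_neg h2]
        cases rest with
        | nil => exact ⟨A, [], rfl, hAV⟩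
        | cons B rest' =>
            exact ⟨insert x B, rest', rfl, fun h => hxV (h (Finset.mem_insert_self x B))⟩
    · rw [if_neg hxA]
      exact ⟨A, _, rfl, hAV⟩
  constructor
  · intro hne σ hG
    cases hlev : levelFn Sig σ.1 with
    | none => exact absurd (keynone σ.1 σ.2 hG hlev).2 hne
    | some x =>
        obtain ⟨h1, h2⟩ := keysome σ hG x hlev
        exact ⟨x, rfl, h1, h2⟩
  · intro hfull
    have hSigne : Sig ≠ [] := by
      obtain ⟨y, hy, hyV⟩ := Finset.exists_of_ssubset hV
      intro h
      have := (hmem y).2 (Finset.mem_sdiff.2 ⟨hy, hyV⟩)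
      rw [h] at this
      exact absurd this List.not_mem_nil
    have hcrit_osp : IsOSP (Finset.range (n + 1)) (P ++ Sig.map (fun y => ({y} : Finset ℕ))) := by
      refine ⟨?_, ?_, ?_⟩
      · intro B hB
        rcases List.mem_append.1 hB with h | h
        · exact hPne B h
        · obtain ⟨y, _, rfl⟩ := List.mem_map.1 h
          exact ⟨y, Finset.mem_singleton_self y⟩
      · rw [List.pairwise_append]
        refine ⟨hP.2, ?_, ?_⟩
        · exact List.Pairwise.map _ (fun a b hab => Finset.disjoint_singleton.2 hab) hnd
        · intro B hB C hC
          obtain ⟨y, hy, rfl⟩ := List.mem_map.1 hC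
          rw [Finset.disjoint_singleton_right]
          exact fun hyB => hSignotV y hy (hPsubV B hB hyB)
      · rw [my_lunion_append, my_lunion_map_singleton, hfull, hSig_to]
        exact Finset.union_sdiff_of_subset hVsub
    have hcrit_in : InGammaVA V P (P ++ Sig.map (fun y => ({y} : Finset ℕ))) := by
      cases hS : Sig with
      | nil => exact absurd hS hSigne
      | cons y ys =>
          refine ⟨{y}, ys.map (fun y => ({y} : Finset ℕ)), rfl, ?_⟩
          rw [Finset.singleton_subset_iff]
          exact hSignotV y (by rw [hS]; exact List.mem_cons_self)
    refine ⟨⟨hcrit_osp, hcrit_in⟩, ?_⟩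
    intro σ hG
    constructor
    · constructor
      · intro h0
        exact (keynone σ.1 σ.2 hG h0).1
      · intro h0
        rw [my_levelFn_none_iff, h0]
        exact Or.inr ⟨P, rfl⟩
    · intro hne
      cases hlev : levelFn Sig σ.1 with
      | none => exact absurd (keynone σ.1 σ.2 hG hlev).1 hne
      | some x =>
          obtain ⟨h1, h2⟩ := keysome σ hG x hlev
          exact ⟨x, rfl, h1, h2⟩
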